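/- arXiv:math/0606163 — 2 statements merged into one kernel-verified Lean document; each statement's English description precedes it below -/
import Mathlib

section
/- For every integer n ≥ 1, the formal power series F(n,x) = ∑_{k≥0} s(B(n)^k) x^k over ℚ satisfies the functional equation F(n,x) · (1 − x·(F(n−1,−x) + 1)) = 1 + F(n−1,−x), where F(n−1,−x) denotes the series obtained from F(n−1,x) by substituting −x for x. -/
/-- The `(n+1) × (n+1)` 0-1 matrix whose `(i,j)` entry is `1` iff `i + j ≤ n`,
with rational entries. -/
def B (n : ℕ) : Matrix (Fin (n + 1)) (Fin (n + 1)) ℚ :=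
  Matrix.of fun i j => if (i : ℕ) + (j : ℕ) ≤ n then 1 else 0

/-- `s M` is the sum of all entries of the square matrix `M`. -/
def s {n : ℕ} (M : Matrix (Fin n) (Fin n) ℚ) : ℚ := ∑ i, ∑ j, M i j

/-- `F n` is the power series `∑_{k ≥ 0} s(B(n)^k) xᵏ`. -/
noncomputable def F (n : ℕ) : PowerSeries ℚ := PowerSeries.mk fun k => s (B n ^ k)

/-- The all-ones matrix. -/
def Jm (N : ℕ) : Matrix (Fin N) (Fin N) ℚ := Matrix.of fun _ _ => 1

/-- `B m` padded with one extra zero row and column, inside size `m + 2`. -/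
def Em (m : ℕ) : Matrix (Fin (m + 2)) (Fin (m + 2)) ℚ :=
  Matrix.of fun i j => if (i : ℕ) + (j : ℕ) ≤ m then 1 else 0

lemma s_one (N : ℕ) : s (1 : Matrix (Fin N) (Fin N) ℚ) = N := by
  simp [s, Matrix.one_apply]

lemma s_add {N : ℕ} (X Y : Matrix (Fin N) (Fin N) ℚ) : s (X + Y) = s X + s Y := by
  simp [s, Finset.sum_add_distrib]

lemma s_sum {N : ℕ} {α : Type*} (t : Finset α) (f : α → Matrix (Fin N) (Fin N) ℚ) :
    s (∑ x ∈ t, f x) = ∑ x ∈ t, s (f x) := by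
  classical
  induction t using Finset.induction_on with
  | empty => simp [s]
  | insert _ _ h ih => rw [Finset.sum_insert h, s_add, ih, Finset.sum_insert h]

lemma s_smul {N : ℕ} (c : ℚ) (X : Matrix (Fin N) (Fin N) ℚ) : s (c • X) = c * s X := by
  simp [s, Finset.mul_sum]

lemma s_mul_J_mul {N : ℕ} (X Y : Matrix (Fin N) (Fin N) ℚ) :
    s (X * (Jm N * Y)) = s X * s Y := by
  simp only [s, Jm, Matrix.mul_apply, Matrix.of_apply, one_mul]
  have h1 : ∀ i j : Fin N, ∑ p, X i p * (∑ q, Y q j) = (∑ p, X i p) * (∑ q, Y q j) :=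
    fun i j => (Finset.sum_mul _ _ _).symm
  simp only [h1]
  rw [← Finset.sum_mul_sum]
  congr 1
  rw [Finset.sum_comm]

lemma submatrix_pow {N : ℕ} (A : Matrix (Fin N) (Fin N) ℚ) (e : Equiv.Perm (Fin N)) (k : ℕ) :
    (A.submatrix e e) ^ k = (A ^ k).submatrix e e := by
  induction k with
  | zero => simp [Matrix.submatrix_one_equiv]
  | succ k ih => rw [pow_succ, pow_succ, ih, Matrix.submatrix_mul_equiv]

lemma s_submatrix {N : ℕ} (A : Matrix (Fin N) (Fin N) ℚ) (e : Equiv.Perm (Fin N)) :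
    s (A.submatrix e e) = s A := by
  simp only [s, Matrix.submatrix_apply]
  refine Fintype.sum_equiv e _ _ fun i => ?_
  exact Fintype.sum_equiv e _ _ fun j => rfl

lemma B_eq_submatrix (m : ℕ) :
    B (m + 1) = (Jm (m + 2) - Em m).submatrix Fin.revPerm Fin.revPerm := by
  ext i j
  have hi : (i : ℕ) < m + 2 := i.isLt
  have hj : (j : ℕ) < m + 2 := j.isLt
  simp only [B, Jm, Em, Matrix.submatrix_apply, Matrix.sub_apply, Matrix.of_apply,
    Fin.revPerm_apply, Fin.val_rev]
  split_ifs with h1 h2 h2 <;> try norm_num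
  all_goals omega

lemma s_B_eq (m k : ℕ) : s (B (m + 1) ^ k) = s ((Jm (m + 2) - Em m) ^ k) := by
  rw [B_eq_submatrix, submatrix_pow, s_submatrix]

lemma mk_castSucc {N : ℕ} (t : Fin N) (h : ((t.castSucc : Fin (N + 1)) : ℕ) < N) :
    (⟨((t.castSucc : Fin (N + 1)) : ℕ), h⟩ : Fin N) = t := Fin.ext (by simp)

lemma Em_pow (m k : ℕ) (i j : Fin (m + 2)) :
    (Em m ^ (k + 1)) i j =
      if h : (i : ℕ) ≤ m ∧ (j : ℕ) ≤ m then
        (B m ^ (k + 1)) ⟨i, by omega⟩ ⟨j, by omega⟩ else 0 := by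
  induction k generalizing i j with
  | zero =>
    simp only [zero_add, pow_one]
    by_cases h : (i : ℕ) ≤ m ∧ (j : ℕ) ≤ m
    · rw [dif_pos h]; rfl
    · rw [dif_neg h]
      simp only [Em, Matrix.of_apply]
      rw [if_neg (by omega)]
  | succ k ih =>
    by_cases hj : (j : ℕ) ≤ m
    · by_cases hi : (i : ℕ) ≤ m
      · rw [dif_pos ⟨hi, hj⟩]
        conv_rhs => rw [pow_succ, Matrix.mul_apply]
        rw [pow_succ, Matrix.mul_apply, Fin.sum_univ_castSucc]
        have hlast : Em m (Fin.last (m + 1)) j = 0 := by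
          simp only [Em, Matrix.of_apply, Fin.val_last]
          rw [if_neg (by omega)]
        rw [hlast, mul_zero, add_zero]
        refine Finset.sum_congr rfl fun t _ => ?_
        rw [ih, dif_pos ⟨hi, (by simp only [Fin.coe_castSucc]; omega : (t.castSucc : ℕ) ≤ m)⟩]
        have h2 : Em m t.castSucc j = B m t ⟨j, by omega⟩ := by
          simp only [Em, B, Matrix.of_apply, Fin.coe_castSucc]
        rw [h2]
        simp only [mk_castSucc]
      · rw [dif_neg (by tauto), pow_succ, Matrix.mul_apply]
        refine Finset.sum_eq_zero fun t _ => ?_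
        rw [ih, dif_neg (by tauto), zero_mul]
    · rw [dif_neg (by tauto), pow_succ, Matrix.mul_apply]
      refine Finset.sum_eq_zero fun t _ => ?_
      have h0 : Em m t j = 0 := by
        simp only [Em, Matrix.of_apply]; rw [if_neg (by omega)]
      rw [h0, mul_zero]

lemma s_Em_pow (m k : ℕ) : s (Em m ^ (k + 1)) = s (B m ^ (k + 1)) := by
  simp only [s]
  rw [Fin.sum_univ_castSucc]
  have hlast : ∑ j, (Em m ^ (k + 1)) (Fin.last (m + 1)) j = 0 := by
    refine Finset.sum_eq_zero fun j _ => ?_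
    rw [Em_pow, dif_neg (by simp only [Fin.val_last]; omega)]
  rw [hlast, add_zero]
  refine Finset.sum_congr rfl fun i _ => ?_
  rw [Fin.sum_univ_castSucc]
  have hlast2 : (Em m ^ (k + 1)) i.castSucc (Fin.last (m + 1)) = 0 := by
    rw [Em_pow, dif_neg (by simp only [Fin.val_last]; omega)]
  rw [hlast2, add_zero]
  refine Finset.sum_congr rfl fun j _ => ?_
  rw [Em_pow, dif_pos ⟨(by simp only [Fin.coe_castSucc]; omega),
    (by simp only [Fin.coe_castSucc]; omega)⟩]
  simp only [mk_castSucc]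

lemma telescope {N : ℕ} (C : Matrix (Fin N) (Fin N) ℚ) (k : ℕ) :
    (Jm N + C) ^ (k + 1) =
      C ^ (k + 1) + ∑ i ∈ Finset.range (k + 1), C ^ i * (Jm N * (Jm N + C) ^ (k - i)) := by
  induction k with
  | zero => simp [add_comm]
  | succ k ih =>
    have h1 : (Jm N + C) ^ (k + 1 + 1)
        = Jm N * (Jm N + C) ^ (k + 1) + C * (Jm N + C) ^ (k + 1) := by
      rw [pow_succ' (Jm N + C) (k + 1), add_mul]
    rw [h1]
    nth_rewrite 2 [ih]
    rw [mul_add, Finset.mul_sum]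
    have h2 : ∀ i ∈ Finset.range (k + 1), C * (C ^ i * (Jm N * (Jm N + C) ^ (k - i)))
        = C ^ (i + 1) * (Jm N * (Jm N + C) ^ (k + 1 - (i + 1))) := by
      intro i hi
      rw [← mul_assoc, ← pow_succ']
      have he : k + 1 - (i + 1) = k - i := by omega
      rw [he]
    rw [Finset.sum_congr rfl h2,
      Finset.sum_range_succ' (fun i => C ^ i * (Jm N * (Jm N + C) ^ (k + 1 - i))) (k + 1)]
    rw [← pow_succ']
    simp only [pow_zero, one_mul, Nat.sub_zero]
    abel

lemma s_recurrence (m k : ℕ) :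
    s (B (m + 1) ^ (k + 1)) = s ((-Em m) ^ (k + 1))
      + ∑ i ∈ Finset.range (k + 1), s ((-Em m) ^ i) * s (B (m + 1) ^ (k - i)) := by
  simp only [s_B_eq]
  have hD : Jm (m + 2) - Em m = Jm (m + 2) + (-Em m) := by rw [sub_eq_add_neg]
  rw [hD, telescope, s_add, s_sum]
  refine congrArg _ (Finset.sum_congr rfl fun i _ => ?_)
  rw [s_mul_J_mul]

lemma coeff_H (m i : ℕ) :
    (PowerSeries.coeff i) (1 + PowerSeries.rescale (-1) (F m)) = s ((-Em m) ^ i) := by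
  have hneg : (-Em m) = (-1 : ℚ) • Em m := by rw [neg_one_smul]
  cases i with
  | zero =>
    have h0 : (PowerSeries.coeff 0) (PowerSeries.rescale (-1) (F m)) = s (B m ^ 0) := by
      rw [PowerSeries.coeff_rescale]; simp [F, PowerSeries.coeff_mk]
    rw [map_add, PowerSeries.coeff_one, if_pos rfl, h0]
    simp only [pow_zero, s_one]
    push_cast
    ring
  | succ k =>
    rw [map_add, PowerSeries.coeff_one, if_neg (by omega), PowerSeries.coeff_rescale,
      zero_add, hneg, smul_pow, s_smul, s_Em_pow]
    simp [F, PowerSeries.coeff_mk]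

theorem F_functional_equation (n : ℕ) (hn : 1 ≤ n) :
    F n * (1 - PowerSeries.X * (PowerSeries.rescale (-1) (F (n - 1)) + 1))
      = 1 + PowerSeries.rescale (-1) (F (n - 1)) := by
  obtain ⟨m, rfl⟩ : ∃ m, n = m + 1 := ⟨n - 1, by omega⟩
  simp only [Nat.add_sub_cancel]
  set G := PowerSeries.rescale (-1) (F m) with hG
  have hF : F (m + 1) = (1 + G) + PowerSeries.X * ((1 + G) * F (m + 1)) := by
    ext k
    cases k with
    | zero =>
      simp only [map_add, PowerSeries.coeff_zero_eq_constantCoeff, map_mul,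
        PowerSeries.constantCoeff_X, zero_mul, add_zero, map_one]
      show (PowerSeries.constantCoeff) (F (m + 1)) = _
      have h0 : (PowerSeries.constantCoeff) (F (m + 1)) = s (B (m + 1) ^ 0) := by
        simp [F, ← PowerSeries.coeff_zero_eq_constantCoeff, PowerSeries.coeff_mk]
      have h1 : (PowerSeries.constantCoeff) G = s (B m ^ 0) := by
        simp [hG, F, ← PowerSeries.coeff_zero_eq_constantCoeff, PowerSeries.coeff_rescale,
          PowerSeries.coeff_mk]
      rw [h0, h1, pow_zero, pow_zero, s_one, s_one]
      push_cast
      ring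
    | succ k =>
      rw [map_add, PowerSeries.coeff_succ_X_mul, PowerSeries.coeff_mul]
      have hcF : ∀ j, (PowerSeries.coeff j) (F (m + 1)) = s (B (m + 1) ^ j) := fun j => by
        simp [F, PowerSeries.coeff_mk]
      rw [hcF]
      have hterm : ∀ p ∈ Finset.HasAntidiagonal.antidiagonal k,
          (PowerSeries.coeff p.1) (1 + G) * (PowerSeries.coeff p.2) (F (m + 1))
            = s ((-Em m) ^ p.1) * s (B (m + 1) ^ p.2) := fun p _ => by
        rw [hG, coeff_H, hcF]
      rw [Finset.sum_congr rfl hterm, Finset.Nat.sum_antidiagonal_eq_sum_range_succ_mk,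
        hG, coeff_H]
      exact s_recurrence m k
  linear_combination hF
end

section
/- Define the sequence of polynomials q_0(x) = 1 and q_n(x) = Q_{n−1}(x) for n ≥ 1. Then, as formal power series in y with coefficients in ℚ[x], (∑_{n≥0} q_n(x) y^n) · (1 − y²·(2 − x² − y²)) = (1 + y)·(1 − x y − y²). -/
/-- `Q n = det (I - x • B(n))`, a polynomial with rational coefficients. -/
noncomputable def Q (n : ℕ) : Polynomial ℚ :=
  ((1 : Matrix (Fin (n + 1)) (Fin (n + 1)) (Polynomial ℚ))
    - (Polynomial.X : Polynomial ℚ) • (B n).map (Polynomial.C ·)).det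

/-- `q 0 = 1` and `q (n+1) = Q n`. -/
noncomputable def q : ℕ → Polynomial ℚ
  | 0 => 1
  | n + 1 => Q n

namespace QGen

noncomputable def Amat (m : ℕ) (c : Polynomial ℚ) :
    Matrix (Fin (m + 1)) (Fin (m + 1)) (Polynomial ℚ) :=
  Matrix.of fun i j =>
    (if (i : ℕ) = (j : ℕ) then 1 else 0) - (if (i : ℕ) = (j : ℕ) + 1 then 1 else 0)
      + c * (if (i : ℕ) + (j : ℕ) = m then 1 else 0)

noncomputable def D (m : ℕ) (c : Polynomial ℚ) : Polynomial ℚ := (Amat m c).det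

noncomputable def Nmat (n : ℕ) : Matrix (Fin (n + 1)) (Fin (n + 1)) (Polynomial ℚ) :=
  Matrix.of fun i j => if (i : ℕ) = (j : ℕ) + 1 then 1 else 0

lemma mulN (n : ℕ) (L : Matrix (Fin (n + 1)) (Fin (n + 1)) (Polynomial ℚ)) (i j : Fin (n + 1)) :
    (L * Nmat n) i j = if h : (j : ℕ) + 1 < n + 1 then L i ⟨(j : ℕ) + 1, h⟩ else 0 := by
  rw [Matrix.mul_apply]
  split
  case isTrue h =>
    rw [Finset.sum_eq_single (⟨(j : ℕ) + 1, h⟩ : Fin (n + 1))]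
    · simp [Nmat]
    · intro k _ hk
      have : (k : ℕ) ≠ (j : ℕ) + 1 := fun hkk => hk (Fin.ext hkk)
      simp [Nmat, this]
    · simp
  case isFalse h =>
    apply Finset.sum_eq_zero
    intro k _
    have hk := k.isLt
    have : ¬ ((k : ℕ) = (j : ℕ) + 1) := by omega
    simp [Nmat, this]

lemma detN (n : ℕ) : (1 - Nmat n).det = 1 := by
  rw [Matrix.det_of_lowerTriangular]
  · apply Finset.prod_eq_one
    intro i _
    simp [Nmat, Matrix.sub_apply, Matrix.one_apply]
  · intro i j hij
    have hij' : (i : ℕ) < (j : ℕ) := hij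
    have h1 : ¬ (i = j) := by intro h; subst h; omega
    have h2 : ¬ ((i : ℕ) = (j : ℕ) + 1) := by omega
    simp [Nmat, Matrix.sub_apply, Matrix.one_apply, h1, h2]

lemma prod_eq (n : ℕ) :
    ((1 : Matrix (Fin (n + 1)) (Fin (n + 1)) (Polynomial ℚ))
      - (Polynomial.X : Polynomial ℚ) • (B n).map (Polynomial.C ·)) * (1 - Nmat n)
      = Amat n (-Polynomial.X) := by
  apply Matrix.ext; intro i j
  rw [Matrix.mul_sub, Matrix.mul_one, Matrix.sub_apply, mulN]
  have hi := i.isLt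
  have hj := j.isLt
  simp only [Matrix.sub_apply, Matrix.smul_apply, Matrix.one_apply, Matrix.map_apply, B, Amat,
    Matrix.of_apply, smul_eq_mul, apply_ite Polynomial.C, map_one, map_zero, Fin.ext_iff]
  split_ifs <;> first | ring1 | omega | (exfalso; omega) | simp_all

lemma QD (n : ℕ) : Q n = D n (-Polynomial.X) := by
  unfold Q D
  rw [← prod_eq n, Matrix.det_mul, detN, mul_one]

lemma d0 (c : Polynomial ℚ) : D 0 c = 1 + c := by
  simp [D, Amat, Matrix.det_fin_one]

lemma d1 (c : Polynomial ℚ) : D 1 c = 1 + c - c ^ 2 := by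
  simp [D, Amat, Matrix.det_fin_two]
  ring



lemma minor00 (m : ℕ) (c : Polynomial ℚ) :
    ((Amat (m + 2) c).submatrix Fin.succ (Fin.succAbove 0)).det = D m c := by
  rw [Matrix.det_succ_column _ (Fin.last (m + 1))]
  have key : ∀ i : Fin (m + 2),
      (-1 : Polynomial ℚ) ^ ((i : ℕ) + ((Fin.last (m + 1) : Fin (m + 2)) : ℕ))
        * ((Amat (m + 2) c).submatrix Fin.succ (Fin.succAbove 0)) i (Fin.last (m + 1))
        * (((Amat (m + 2) c).submatrix Fin.succ (Fin.succAbove 0)).submatrix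
            i.succAbove (Fin.last (m + 1)).succAbove).det
      = if i = Fin.last (m + 1) then
          (-1 : Polynomial ℚ) ^ ((m + 1) + (m + 1))
            * (((Amat (m + 2) c).submatrix Fin.succ (Fin.succAbove 0)).submatrix
                (Fin.last (m + 1)).succAbove (Fin.last (m + 1)).succAbove).det
        else 0 := by
    intro i
    by_cases h : i = Fin.last (m + 1)
    · subst h
      rw [if_pos rfl]
      have hentry : ((Amat (m + 2) c).submatrix Fin.succ (Fin.succAbove 0))
          (Fin.last (m + 1)) (Fin.last (m + 1)) = 1 := by
        simp only [Matrix.submatrix_apply, Fin.zero_succAbove, Amat, Matrix.of_apply,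
          Fin.succ_last, Fin.val_last, Fin.val_succ]
        simp only [Nat.succ_eq_add_one]
        split_ifs <;> first | ring1 | omega | (exfalso; omega) | simp_all
      rw [hentry, Fin.val_last]
      ring
    · rw [if_neg h]
      have hentry : ((Amat (m + 2) c).submatrix Fin.succ (Fin.succAbove 0))
          i (Fin.last (m + 1)) = 0 := by
        simp only [Matrix.submatrix_apply, Fin.zero_succAbove, Amat, Matrix.of_apply,
          Fin.succ_last, Fin.val_last, Fin.val_succ]
        have hi : (i : ℕ) < m + 1 := Fin.val_lt_last h
        simp only [Nat.succ_eq_add_one]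
        split_ifs <;> first | ring1 | omega | (exfalso; omega) | simp_all
      rw [hentry]
      ring
  rw [Finset.sum_congr rfl fun i _ => key i, Finset.sum_ite_eq' Finset.univ (Fin.last (m + 1))]
  rw [if_pos (Finset.mem_univ _)]
  have hpow : ((-1 : Polynomial ℚ)) ^ ((m + 1) + (m + 1)) = 1 :=
    Even.neg_one_pow ⟨m + 1, by ring⟩
  rw [hpow, one_mul]
  congr 1
  apply Matrix.ext; intro i j
  simp only [Matrix.submatrix_apply, Fin.succAbove_last, Fin.zero_succAbove, Amat,
    Matrix.of_apply, Fin.val_succ, Fin.coe_castSucc]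
  have hi := i.isLt
  have hj := j.isLt
  split_ifs <;> first | ring1 | omega | (exfalso; omega) | simp_all

lemma minorLast (m : ℕ) (c : Polynomial ℚ) :
    ((Amat (m + 2) c).submatrix Fin.succ (Fin.succAbove (Fin.last (m + 2)))).det
      = (-1 : Polynomial ℚ) ^ (m + 2) * D (m + 1) (-c) := by
  have heq : (Amat (m + 2) c).submatrix Fin.succ (Fin.succAbove (Fin.last (m + 2)))
      = - (Amat (m + 1) (-c)).transpose := by
    apply Matrix.ext; intro i j
    simp only [Matrix.submatrix_apply, Fin.succAbove_last, Matrix.neg_apply,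
      Matrix.transpose_apply, Amat, Matrix.of_apply, Fin.val_succ, Fin.coe_castSucc]
    have hi := i.isLt
    have hj := j.isLt
    split_ifs <;> first | ring1 | omega | (exfalso; omega) | simp_all
  rw [heq, Matrix.det_neg, Matrix.det_transpose, Fintype.card_fin]
  rfl

lemma Drec (m : ℕ) (c : Polynomial ℚ) :
    D (m + 2) c = D m c + c * D (m + 1) (-c) := by
  rw [show D (m + 2) c = (Amat (m + 2) c).det from rfl, Matrix.det_succ_row_zero]
  have key : ∀ j : Fin (m + 3),
      (-1 : Polynomial ℚ) ^ (j : ℕ) * (Amat (m + 2) c) 0 j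
        * ((Amat (m + 2) c).submatrix Fin.succ j.succAbove).det
      = (if j = 0 then ((Amat (m + 2) c).submatrix Fin.succ (Fin.succAbove 0)).det else 0)
        + (if j = Fin.last (m + 2) then
            (-1 : Polynomial ℚ) ^ (m + 2) * c
              * ((Amat (m + 2) c).submatrix Fin.succ
                  (Fin.succAbove (Fin.last (m + 2)))).det else 0) := by
    intro j
    by_cases h0 : j = 0
    · subst h0
      rw [if_pos rfl, if_neg (by simp [Fin.ext_iff])]
      have hentry : (Amat (m + 2) c) 0 0 = 1 := by
        simp only [Amat, Matrix.of_apply, Fin.val_zero]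
        split_ifs <;> first | ring1 | omega | (exfalso; omega) | simp_all
      rw [hentry, Fin.val_zero]
      ring
    · rw [if_neg h0]
      by_cases hl : j = Fin.last (m + 2)
      · subst hl
        rw [if_pos rfl]
        have hentry : (Amat (m + 2) c) 0 (Fin.last (m + 2)) = c := by
          simp only [Amat, Matrix.of_apply, Fin.val_zero, Fin.val_last]
          split_ifs <;> first | ring1 | omega | (exfalso; omega) | simp_all
        rw [hentry, Fin.val_last]
        ring
      · rw [if_neg hl]
        have hj0 : (j : ℕ) ≠ 0 := fun h => h0 (Fin.ext h)
        have hjl : (j : ℕ) ≠ m + 2 := fun h => hl (Fin.ext h)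
        have hj := j.isLt
        have hentry : (Amat (m + 2) c) 0 j = 0 := by
          simp only [Amat, Matrix.of_apply, Fin.val_zero]
          split_ifs <;> first | ring1 | omega | (exfalso; omega) | simp_all
        rw [hentry]
        ring
  rw [Finset.sum_congr rfl fun j _ => key j, Finset.sum_add_distrib,
    Finset.sum_ite_eq' Finset.univ (0 : Fin (m + 3)),
    Finset.sum_ite_eq' Finset.univ (Fin.last (m + 2)),
    if_pos (Finset.mem_univ _), if_pos (Finset.mem_univ _),
    minor00, minorLast]
  have hpow : ((-1 : Polynomial ℚ)) ^ (m + 2) * ((-1 : Polynomial ℚ)) ^ (m + 2) = 1 := by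
    rw [← pow_add]; exact Even.neg_one_pow ⟨m + 2, by ring⟩
  linear_combination (D (m + 1) (-c)) * c * hpow


lemma Qrec4 (m : ℕ) :
    D (m + 4) (-Polynomial.X)
      = (2 - Polynomial.X ^ 2) * D (m + 2) (-Polynomial.X) - D m (-Polynomial.X) := by
  have h1 := Drec (m + 2) (-Polynomial.X)
  have h2 := Drec (m + 1) Polynomial.X
  have h3 := Drec m (-Polynomial.X)
  rw [neg_neg] at h1 h3
  linear_combination h1 - Polynomial.X * h2 - h3

lemma Q3eq :
    D 3 (-Polynomial.X)
      = (2 - Polynomial.X ^ 2) * D 1 (-Polynomial.X) - 1 := by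
  have h1 := Drec 1 (-Polynomial.X)
  have h2 := Drec 0 Polynomial.X
  rw [neg_neg] at h1
  linear_combination h1 - Polynomial.X * h2 - Polynomial.X * (d0 Polynomial.X)
    - d1 (-Polynomial.X)

lemma qrec (n : ℕ) :
    q (n + 4) = (2 - Polynomial.X ^ 2) * q (n + 2) - q n := by
  cases n with
  | zero =>
    show Q 3 = (2 - Polynomial.X ^ 2) * Q 1 - 1
    rw [QD, QD]; exact Q3eq
  | succ k =>
    show Q (k + 4) = (2 - Polynomial.X ^ 2) * Q (k + 2) - Q k
    rw [QD, QD, QD]; exact Qrec4 k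

lemma Qval0 : Q 0 = 1 - Polynomial.X := by
  rw [QD]; rw [d0]; ring

lemma Qval1 : Q 1 = 1 - Polynomial.X - Polynomial.X ^ 2 := by
  rw [QD]; rw [d1]; ring

lemma Qval2 :
    Q 2 = 1 - 2 * Polynomial.X - Polynomial.X ^ 2 + Polynomial.X ^ 3 := by
  rw [QD]
  have h := Drec 0 (-Polynomial.X)
  rw [neg_neg] at h
  rw [h, d0, d1]; ring

end QGen

open QGen

theorem Q_bivariate_gen_fun :
    (PowerSeries.mk q)
        * (1 - PowerSeries.X ^ 2
            * (PowerSeries.C (R := Polynomial ℚ) (2 - Polynomial.X ^ 2) - PowerSeries.X ^ 2))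
      = (1 + PowerSeries.X)
        * (1 - PowerSeries.C (R := Polynomial ℚ) Polynomial.X * PowerSeries.X
            - PowerSeries.X ^ 2) := by
  have ha : (PowerSeries.mk q)
        * (1 - PowerSeries.X ^ 2
            * (PowerSeries.C (R := Polynomial ℚ) (2 - Polynomial.X ^ 2) - PowerSeries.X ^ 2))
      = PowerSeries.mk q
        - PowerSeries.C (R := Polynomial ℚ) (2 - Polynomial.X ^ 2)
            * (PowerSeries.mk q * PowerSeries.X ^ 2)
        + PowerSeries.mk q * PowerSeries.X ^ 4 := by ring
  have hb : (1 + PowerSeries.X)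
        * (1 - PowerSeries.C (R := Polynomial ℚ) Polynomial.X * PowerSeries.X
            - PowerSeries.X ^ 2)
      = 1 + PowerSeries.X - PowerSeries.C (R := Polynomial ℚ) Polynomial.X * PowerSeries.X
        - PowerSeries.C (R := Polynomial ℚ) Polynomial.X * PowerSeries.X ^ 2
        - PowerSeries.X ^ 2 - PowerSeries.X ^ 3 := by ring
  rw [ha, hb]
  set a : Polynomial ℚ := 2 - Polynomial.X ^ 2 with ha2
  refine PowerSeries.ext fun n => ?_
  simp only [map_add, map_sub, PowerSeries.coeff_mk, PowerSeries.coeff_C_mul,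
    PowerSeries.coeff_mul_X_pow', PowerSeries.coeff_one, PowerSeries.coeff_X,
    PowerSeries.coeff_X_pow, PowerSeries.coeff_C]
  rcases n with _ | _ | _ | _ | n
  · norm_num
    rfl
  · norm_num
    show Q 0 = 1 - Polynomial.X
    exact Qval0
  · norm_num
    show Q 1 - a * q 0 = -Polynomial.X - 1
    rw [Qval1, ha2]
    show (1 : Polynomial ℚ) - Polynomial.X - Polynomial.X ^ 2
        - (2 - Polynomial.X ^ 2) * 1 = -Polynomial.X - 1
    ring
  · norm_num
    show Q 2 - a * Q 0 = -1
    rw [Qval2, Qval0, ha2]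
    ring
  · have h := qrec n
    rw [ha2]
    simp only [show n + 1 + 1 + 1 + 1 - 2 = n + 2 from by omega,
      show n + 1 + 1 + 1 + 1 - 4 = n from by omega,
      show n + 1 + 1 + 1 + 1 = n + 4 from by omega]
    split_ifs <;> first | (exfalso; omega) | linear_combination h | simp_all
end
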